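/- arXiv:2507.15438 — 4 statements merged into one kernel-verified Lean document; each statement's English description precedes it below -/
import Mathlib

section
/- Let γ₁ > 0 > γ₂ and g(x) = (γ₁·e^{γ₂x} - γ₂·e^{γ₁x})/(γ₁ - γ₂). Then for all x > 0, g'(x)/g(x) - g''(x)/g'(x) = (γ₂·e^{γ₁x}/g(x))·(γ₁·e^{γ₂x}/g'(x)), and this quantity is strictly negative. -/
theorem stmt_4 (γ₁ γ₂ : ℝ) (h1 : 0 < γ₁) (h2 : γ₂ < 0) (g : ℝ → ℝ)
    (hg : ∀ x, g x = (γ₁ * Real.exp (γ₂ * x) - γ₂ * Real.exp (γ₁ * x)) / (γ₁ - γ₂)) :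
    ∀ x : ℝ, 0 < x →
      deriv g x / g x - deriv (deriv g) x / deriv g x =
        (γ₂ * Real.exp (γ₁ * x) / g x) * (γ₁ * Real.exp (γ₂ * x) / deriv g x) ∧
      deriv g x / g x - deriv (deriv g) x / deriv g x < 0 := by
  have hΔ : (0:ℝ) < γ₁ - γ₂ := by linarith
  have hΔ' : γ₁ - γ₂ ≠ 0 := ne_of_gt hΔ
  have hgf : g = fun x => (γ₁ * Real.exp (γ₂ * x) - γ₂ * Real.exp (γ₁ * x)) / (γ₁ - γ₂) :=
    funext hg
  subst hgf
  have he : ∀ (c x : ℝ), HasDerivAt (fun y => Real.exp (c * y)) (c * Real.exp (c * x)) x := by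
    intro c x
    have := (((hasDerivAt_id x).const_mul c).exp)
    simpa [mul_comm] using this
  have hd1 : ∀ x, HasDerivAt
      (fun x => (γ₁ * Real.exp (γ₂ * x) - γ₂ * Real.exp (γ₁ * x)) / (γ₁ - γ₂))
      (γ₁ * γ₂ * (Real.exp (γ₂ * x) - Real.exp (γ₁ * x)) / (γ₁ - γ₂)) x := by
    intro x
    have := (((he γ₂ x).const_mul γ₁).sub ((he γ₁ x).const_mul γ₂)).div_const (γ₁ - γ₂)
    simp only [Pi.sub_apply] at this
    refine this.congr_deriv ?_
    ring
  have hD1 : deriv (fun x => (γ₁ * Real.exp (γ₂ * x) - γ₂ * Real.exp (γ₁ * x)) / (γ₁ - γ₂))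
      = fun x => γ₁ * γ₂ * (Real.exp (γ₂ * x) - Real.exp (γ₁ * x)) / (γ₁ - γ₂) :=
    funext fun x => (hd1 x).deriv
  have hd2 : ∀ x, HasDerivAt
      (fun x => γ₁ * γ₂ * (Real.exp (γ₂ * x) - Real.exp (γ₁ * x)) / (γ₁ - γ₂))
      (γ₁ * γ₂ * (γ₂ * Real.exp (γ₂ * x) - γ₁ * Real.exp (γ₁ * x)) / (γ₁ - γ₂)) x := by
    intro x
    have := (((he γ₂ x).sub (he γ₁ x)).const_mul (γ₁ * γ₂)).div_const (γ₁ - γ₂)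
    simp only [Pi.sub_apply] at this
    convert this using 1
  have hD2 : deriv (fun x => γ₁ * γ₂ * (Real.exp (γ₂ * x) - Real.exp (γ₁ * x)) / (γ₁ - γ₂))
      = fun x => γ₁ * γ₂ * (γ₂ * Real.exp (γ₂ * x) - γ₁ * Real.exp (γ₁ * x)) / (γ₁ - γ₂) :=
    funext fun x => (hd2 x).deriv
  intro x hx
  rw [hD1, hD2]
  simp only
  set a := Real.exp (γ₂ * x) with ha
  set b := Real.exp (γ₁ * x) with hb
  have hapos : 0 < a := Real.exp_pos _
  have hbpos : 0 < b := Real.exp_pos _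
  have hab : a < b := by
    apply Real.exp_lt_exp.2
    nlinarith
  have hgpos : 0 < (γ₁ * a - γ₂ * b) / (γ₁ - γ₂) := by
    apply div_pos _ hΔ
    nlinarith
  have hg'pos : 0 < γ₁ * γ₂ * (a - b) / (γ₁ - γ₂) := by
    apply div_pos _ hΔ
    nlinarith [mul_pos (mul_pos h1 (neg_pos.2 h2)) (sub_pos.2 hab)]
  have hgne : (γ₁ * a - γ₂ * b) / (γ₁ - γ₂) ≠ 0 := ne_of_gt hgpos
  have hg'ne : γ₁ * γ₂ * (a - b) / (γ₁ - γ₂) ≠ 0 := ne_of_gt hg'pos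
  have hnum1 : γ₁ * a - γ₂ * b ≠ 0 := by nlinarith
  have hnum2 : γ₁ * γ₂ * (a - b) ≠ 0 := by
    have := mul_pos (mul_pos h1 (neg_pos.2 h2)) (sub_pos.2 hab)
    nlinarith
  constructor
  · rw [div_sub_div _ _ hgne hg'ne]
    conv_rhs => rw [div_mul_div_comm]
    congr 1
    field_simp
    ring
  · have key : γ₁ * γ₂ * (a - b) / (γ₁ - γ₂) / ((γ₁ * a - γ₂ * b) / (γ₁ - γ₂)) -
        γ₁ * γ₂ * (γ₂ * a - γ₁ * b) / (γ₁ - γ₂) / (γ₁ * γ₂ * (a - b) / (γ₁ - γ₂)) =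
        (γ₂ * b / ((γ₁ * a - γ₂ * b) / (γ₁ - γ₂))) *
        (γ₁ * a / (γ₁ * γ₂ * (a - b) / (γ₁ - γ₂))) := by
      field_simp
      ring
    rw [key]
    apply mul_neg_of_neg_of_pos
    · exact div_neg_of_neg_of_pos (by nlinarith) hgpos
    · exact div_pos (by positivity) hg'pos
end

section
/- Let (B_t) be a standard Brownian motion and B*_t = sup_{s ≤ t} B_s. For every t > 0 and all real a, b with a > max{b, 0}: P(B*_t ≥ a, B_t ≤ b) = P(B_t ≥ 2a - b). -/
open MeasureTheory ProbabilityTheory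

/-- A standard one-dimensional Brownian motion started at `0` under `P`. -/
structure IsStandardBM {Ω : Type*} [MeasurableSpace Ω] (P : Measure Ω)
    (B : ℝ → Ω → ℝ) : Prop where
  isProb : IsProbabilityMeasure P
  meas : ∀ t, Measurable (B t)
  init : ∀ᵐ ω ∂P, B 0 ω = 0
  cont : ∀ᵐ ω ∂P, Continuous fun t => B t ω
  incr : ∀ s t : ℝ, 0 ≤ s → s ≤ t →
    P.map (fun ω => B t ω - B s ω) = gaussianReal 0 (Real.toNNReal (t - s))
  indep : ∀ (n : ℕ) (u : Fin (n + 1) → ℝ), Monotone u → 0 ≤ u 0 →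
    iIndepFun
      (fun i : Fin n => fun ω => B (u i.succ) ω - B (u i.castSucc) ω) P

/-- Running maximum `sup_{0 ≤ s ≤ t} B s ω` of a process. -/
noncomputable def runMax {Ω : Type*} (B : ℝ → Ω → ℝ) (t : ℝ) (ω : Ω) : ℝ :=
  sSup ((fun s => B s ω) '' Set.Icc 0 t)

namespace BMRefl

variable {Ω : Type*}

/-- Partial sum of the first `K` coordinates of a vector in `Fin n → ℝ`. -/
noncomputable def psum (n K : ℕ) (g : Fin n → ℝ) : ℝ :=
  ∑ i ∈ Finset.univ.filter (fun i : Fin n => (i : ℕ) < K), g i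

lemma measurable_psum (n K : ℕ) : Measurable (psum n K) :=
  Finset.measurable_sum _ (fun i _ => measurable_pi_apply i)

lemma tele {n : ℕ} (g : Fin (n + 1) → ℝ) {J : ℕ} (hJ : J ≤ n) :
    psum n J (fun i : Fin n => g i.succ - g i.castSucc) = g ⟨J, by omega⟩ - g 0 := by
  induction J with
  | zero =>
    have : Finset.univ.filter (fun i : Fin n => (i : ℕ) < 0) = ∅ := by
      ext i; simp
    simp [psum, this]
  | succ J ih =>
    have hJn : J < n := hJ
    have hins : Finset.univ.filter (fun i : Fin n => (i : ℕ) < J + 1)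
        = insert (⟨J, hJn⟩ : Fin n) (Finset.univ.filter (fun i : Fin n => (i : ℕ) < J)) := by
      ext i
      simp only [Finset.mem_filter, Finset.mem_univ, true_and, Finset.mem_insert]
      constructor
      · intro h
        rcases Nat.lt_succ_iff_lt_or_eq.mp h with h | h
        · exact Or.inr h
        · exact Or.inl (Fin.ext h)
      · rintro (rfl | h)
        · exact Nat.lt_succ_self J
        · exact Nat.lt_succ_of_lt h
    have hnotmem : (⟨J, hJn⟩ : Fin n) ∉ Finset.univ.filter (fun i : Fin n => (i : ℕ) < J) := by
      simp
    rw [psum, hins, Finset.sum_insert hnotmem]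
    have := ih (Nat.le_of_succ_le hJ)
    rw [psum] at this
    rw [this]
    have h1 : (⟨J, hJn⟩ : Fin n).succ = (⟨J + 1, by omega⟩ : Fin (n + 1)) := rfl
    have h2 : (⟨J, hJn⟩ : Fin n).castSucc = (⟨J, by omega⟩ : Fin (n + 1)) := rfl
    rw [h1, h2]; ring

lemma tele_tail {n : ℕ} (g : Fin (n + 1) → ℝ) {K : ℕ} (hK : K ≤ n) :
    ∑ i ∈ Finset.univ.filter (fun i : Fin n => ¬ (i : ℕ) < K),
      (g i.succ - g i.castSucc) = g (Fin.last n) - g ⟨K, by omega⟩ := by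
  have htot := tele g (le_refl n)
  have hhead := tele g hK
  have hsplit := Finset.sum_filter_add_sum_filter_not Finset.univ
    (fun i : Fin n => (i : ℕ) < K) (fun i : Fin n => g i.succ - g i.castSucc)
  have hall : Finset.univ.filter (fun i : Fin n => (i : ℕ) < n) = Finset.univ := by
    ext i; simp [i.isLt]
  rw [psum, hall] at htot
  rw [psum] at hhead
  have : g (Fin.last n) = g ⟨n, by omega⟩ := rfl
  rw [this]
  linarith [hsplit, htot, hhead]


variable {Ω : Type*} [MeasurableSpace Ω] {P : Measure Ω} {B : ℝ → Ω → ℝ}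

/-- symmetry of centered gaussian -/
lemma gaussian_neg (v : NNReal) :
    (gaussianReal 0 v).map (fun x => -x) = gaussianReal 0 v := by
  have h := gaussianReal_map_const_mul (μ := 0) (v := v) (-1)
  have h2 : (fun x : ℝ => -1 * x) = fun x : ℝ => -x := by funext x; ring
  rw [h2] at h
  rw [h]
  congr 1
  · norm_num
  · ext; simp

theorem reflect_pair (hB : IsStandardBM P B) {n : ℕ} (p : Fin (n + 1) → ℝ)
    (hp : Monotone p) (hp0 : p 0 = 0) (K : ℕ) (hK : K ≤ n)
    {C : Set ((Fin n → ℝ) × ℝ)} (hC : MeasurableSet C) :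
    P {ω | ((fun i : Fin n => if (i : ℕ) < K then B (p i.succ) ω - B (p i.castSucc) ω else 0),
        B (p (Fin.last n)) ω - B (p ⟨K, by omega⟩) ω) ∈ C}
    = P {ω | ((fun i : Fin n => if (i : ℕ) < K then B (p i.succ) ω - B (p i.castSucc) ω else 0),
        -(B (p (Fin.last n)) ω - B (p ⟨K, by omega⟩) ω)) ∈ C} := by
  haveI := hB.isProb
  classical
  set X : Fin n → Ω → ℝ := fun i ω => B (p i.succ) ω - B (p i.castSucc) ω with hX
  set A : Ω → (Fin n → ℝ) := fun ω i => if (i : ℕ) < K then X i ω else 0 with hA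
  set Y : Ω → ℝ := fun ω => B (p (Fin.last n)) ω - B (p ⟨K, by omega⟩) ω with hY
  have hXm : ∀ i, Measurable (X i) := fun i => (hB.meas _).sub (hB.meas _)
  have hAm : Measurable A := by
    refine measurable_pi_lambda _ (fun i => ?_)
    by_cases h : (i : ℕ) < K
    · simpa [hA, h] using hXm i
    · simpa [hA, h] using measurable_const
  have hYm : Measurable Y := (hB.meas _).sub (hB.meas _)
  -- independence of A and Y
  have hp00 : 0 ≤ p 0 := le_of_eq hp0.symm
  have hiid := hB.indep n p hp hp00
  set S : Finset (Fin n) := Finset.univ.filter (fun i => (i : ℕ) < K) with hS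
  set T : Finset (Fin n) := Finset.univ.filter (fun i => ¬ (i : ℕ) < K) with hT
  have hST : Disjoint S T := by
    rw [Finset.disjoint_left]
    intro x hx hx'
    simp only [hS, hT, Finset.mem_filter, Finset.mem_univ, true_and] at hx hx'
    exact hx' hx
  have hfin := hiid.indepFun_finset S T hST hXm
  have hindep : IndepFun A Y P := by
    have hφ : Measurable (fun (g : (i : S) → ℝ) (i : Fin n) =>
        if h : i ∈ S then g ⟨i, h⟩ else 0) := by
      refine measurable_pi_lambda _ (fun i => ?_)
      by_cases h : i ∈ S
      · simpa [h] using measurable_pi_apply (⟨i, h⟩ : S)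
      · simp only [dif_neg h]; exact measurable_const
    have hψ : Measurable (fun (g : (i : T) → ℝ) => ∑ i : T, g i) := by
      exact Finset.measurable_sum _ (fun i _ => measurable_pi_apply i)
    have := hfin.comp hφ hψ
    have hAeq : (fun (g : (i : S) → ℝ) (i : Fin n) => if h : i ∈ S then g ⟨i, h⟩ else 0) ∘
        (fun a (i : S) => X i a) = A := by
      funext ω i
      by_cases h : i ∈ S
      · simp only [Function.comp_apply, dif_pos h, hA]
        rw [if_pos (by simpa [hS] using h)]
      · simp only [Function.comp_apply, dif_neg h, hA]
        rw [if_neg (by simpa [hS] using h)]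
    have hYeq : (fun (g : (i : T) → ℝ) => ∑ i : T, g i) ∘ (fun a (i : T) => X i a) = Y := by
      funext ω
      simp only [Function.comp_apply]
      have : ∑ i : T, X i ω = ∑ i ∈ T, X i ω := by
        exact Finset.sum_attach T (fun i => X i ω)
      rw [this, hT]
      have := tele_tail (fun j => B (p j) ω) hK
      simpa [hX, hY] using this
    rw [hAeq, hYeq] at this
    exact this
  -- laws
  have hYlaw : P.map Y = gaussianReal 0 (Real.toNNReal (p (Fin.last n) - p ⟨K, by omega⟩)) := by
    refine hB.incr _ _ ?_ ?_
    · rw [← hp0]; exact hp (by exact Fin.zero_le _)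
    · exact hp (by exact Fin.le_last _)
  have hnegYlaw : P.map (fun ω => -Y ω) = P.map Y := by
    have : (fun ω => -Y ω) = (fun x : ℝ => -x) ∘ Y := rfl
    rw [this, ← Measure.map_map (by fun_prop) hYm, hYlaw, gaussian_neg]
  have h1 : P.map (fun ω => (A ω, Y ω)) = (P.map A).prod (P.map Y) :=
    (indepFun_iff_map_prod_eq_prod_map_map hAm.aemeasurable hYm.aemeasurable).mp hindep
  have h2 : P.map (fun ω => (A ω, -Y ω)) = (P.map A).prod (P.map (fun ω => -Y ω)) :=
    (indepFun_iff_map_prod_eq_prod_map_map hAm.aemeasurable hYm.neg.aemeasurable).mp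
      hindep.neg_right
  have hmaps : P.map (fun ω => (A ω, Y ω)) = P.map (fun ω => (A ω, -Y ω)) := by
    rw [h1, h2, hnegYlaw]
  have e1 : P {ω | (A ω, Y ω) ∈ C} = P.map (fun ω => (A ω, Y ω)) C := by
    rw [Measure.map_apply (hAm.prodMk hYm) hC]; rfl
  have e2 : P {ω | (A ω, -Y ω) ∈ C} = P.map (fun ω => (A ω, -Y ω)) C := by
    rw [Measure.map_apply (f := fun ω => (A ω, -Y ω)) (hAm.prodMk hYm.neg) hC]; rfl
  calc P {ω | (A ω, Y ω) ∈ C} = P.map (fun ω => (A ω, Y ω)) C := e1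
    _ = P.map (fun ω => (A ω, -Y ω)) C := by rw [hmaps]
    _ = P {ω | (A ω, -Y ω) ∈ C} := e2.symm

/-- Discrete path value at partition point `j`, relative to time `0`. -/
noncomputable def Wd (B : ℝ → Ω → ℝ) {n : ℕ} (p : Fin (n + 1) → ℝ) (j : Fin (n + 1))
    (ω : Ω) : ℝ := B (p j) ω - B 0 ω

/-- First hitting (of level `a`) at index `k` among partition points. -/
def hitE (B : ℝ → Ω → ℝ) {n : ℕ} (p : Fin (n + 1) → ℝ) (a : ℝ) (k : Fin (n + 1)) : Set Ω :=
  {ω | a ≤ Wd B p k ω ∧ ∀ j < k, Wd B p j ω < a}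

variable [MeasurableSpace Ω] {P : Measure Ω} {B : ℝ → Ω → ℝ}

lemma measurable_Wd (hB : IsStandardBM P B) {n : ℕ} (p : Fin (n + 1) → ℝ) (j : Fin (n + 1)) :
    Measurable (Wd B p j) := (hB.meas _).sub (hB.meas _)

lemma measurableSet_hitE (hB : IsStandardBM P B) {n : ℕ} (p : Fin (n + 1) → ℝ) (a : ℝ)
    (k : Fin (n + 1)) : MeasurableSet (hitE B p a k) := by
  have h1 : MeasurableSet {ω | a ≤ Wd B p k ω} :=
    measurableSet_le measurable_const (measurable_Wd hB p k)
  have h2 : MeasurableSet {ω | ∀ j < k, Wd B p j ω < a} := by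
    have : {ω | ∀ j < k, Wd B p j ω < a} = ⋂ j : Fin (n+1), ⋂ (_ : j < k), {ω | Wd B p j ω < a} := by
      ext ω; simp
    rw [this]
    exact MeasurableSet.iInter fun j => MeasurableSet.iInter fun _ =>
      measurableSet_lt (measurable_Wd hB p j) measurable_const
  have : hitE B p a k = {ω | a ≤ Wd B p k ω} ∩ {ω | ∀ j < k, Wd B p j ω < a} := rfl
  rw [this]; exact h1.inter h2

lemma hitE_disjoint (B : ℝ → Ω → ℝ) {n : ℕ} (p : Fin (n + 1) → ℝ) (a : ℝ) :
    Pairwise (Function.onFun Disjoint fun k => hitE B p a k) := by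
  intro k k' hkk'
  rcases lt_or_gt_of_ne hkk' with h | h
  · refine Set.disjoint_left.mpr fun ω h1 h2 => ?_
    exact absurd h1.1 (not_le.mpr (h2.2 k h))
  · refine Set.disjoint_left.mpr fun ω h1 h2 => ?_
    exact absurd h2.1 (not_le.mpr (h1.2 k' h))

lemma hitE_union (B : ℝ → Ω → ℝ) {n : ℕ} (p : Fin (n + 1) → ℝ) (a : ℝ) :
    (⋃ k, hitE B p a k) = {ω | ∃ j, a ≤ Wd B p j ω} := by
  ext ω
  simp only [Set.mem_iUnion, Set.mem_setOf_eq]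
  constructor
  · rintro ⟨k, hk, -⟩; exact ⟨k, hk⟩
  · rintro ⟨j, hj⟩
    have hex : ∃ m : ℕ, ∃ h : m < n + 1, a ≤ Wd B p ⟨m, h⟩ ω := ⟨j, j.isLt, by simpa using hj⟩
    classical
    obtain ⟨hm, hma⟩ := Nat.find_spec hex
    refine ⟨⟨Nat.find hex, hm⟩, hma, fun j' hj' => ?_⟩
    by_contra hcon
    push_neg at hcon
    have := Nat.find_min hex (m := (j' : ℕ)) (by simpa [Fin.lt_def] using hj')
    push_neg at this
    exact absurd (this j'.isLt) (not_lt.mpr (by simpa using hcon))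

/-- Key single-index reflection identity. -/
lemma disc_refl_eq (hB : IsStandardBM P B) {n : ℕ} {p : Fin (n + 1) → ℝ}
    (hp : Monotone p) (hp0 : p 0 = 0) (a c : ℝ) (k : Fin (n + 1)) :
    P (hitE B p a k ∩ {ω | c ≤ Wd B p (Fin.last n) ω})
      = P (hitE B p a k ∩ {ω | c ≤ 2 * Wd B p k ω - Wd B p (Fin.last n) ω}) := by
  classical
  set K : ℕ := (k : ℕ) with hKdef
  have hK : K ≤ n := by omega
  set X : Fin n → Ω → ℝ := fun i ω => B (p i.succ) ω - B (p i.castSucc) ω with hX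
  set A : Ω → (Fin n → ℝ) := fun ω i => if (i : ℕ) < K then X i ω else 0 with hA
  set Y : Ω → ℝ := fun ω => B (p (Fin.last n)) ω - B (p ⟨K, by omega⟩) ω with hY
  -- partial sums of A recover Wd for indices ≤ K
  have hpsum : ∀ ω, ∀ J, ∀ hJ : J ≤ K, psum n J (A ω)
      = Wd B p ⟨J, Nat.lt_succ_of_le (hJ.trans hK)⟩ ω := by
    intro ω J hJ
    have h1 : psum n J (A ω) = psum n J (fun i => X i ω) := by
      refine Finset.sum_congr rfl fun i hi => ?_
      simp only [Finset.mem_filter, Finset.mem_univ, true_and] at hi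
      simp [hA, lt_of_lt_of_le hi hJ]
    rw [h1]
    have := tele (fun j => B (p j) ω) (J := J) (by omega)
    rw [psum] at this ⊢
    rw [this, Wd, hp0]
  have hWlast : ∀ ω, Wd B p (Fin.last n) ω = Wd B p k ω + Y ω := by
    intro ω
    simp only [Wd, hY]
    have : p ⟨K, by omega⟩ = p k := congrArg p (Fin.eta k k.isLt)
    rw [this]; ring
  -- the measurable set C
  set C : Set ((Fin n → ℝ) × ℝ) :=
    {gy | (a ≤ psum n K gy.1 ∧ ∀ J < K, psum n J gy.1 < a) ∧ c ≤ psum n K gy.1 + gy.2} with hCdef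
  have hC : MeasurableSet C := by
    have hm1 : Measurable fun gy : (Fin n → ℝ) × ℝ => psum n K gy.1 :=
      (measurable_psum n K).comp measurable_fst
    have e1 : MeasurableSet {gy : (Fin n → ℝ) × ℝ | a ≤ psum n K gy.1} :=
      measurableSet_le measurable_const hm1
    have e2 : MeasurableSet {gy : (Fin n → ℝ) × ℝ | ∀ J < K, psum n J gy.1 < a} := by
      have : {gy : (Fin n → ℝ) × ℝ | ∀ J < K, psum n J gy.1 < a}
          = ⋂ J : ℕ, ⋂ (_ : J < K), {gy : (Fin n → ℝ) × ℝ | psum n J gy.1 < a} := by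
        ext gy; simp
      rw [this]
      exact MeasurableSet.iInter fun J => MeasurableSet.iInter fun _ =>
        measurableSet_lt ((measurable_psum n J).comp measurable_fst) measurable_const
    have e3 : MeasurableSet {gy : (Fin n → ℝ) × ℝ | c ≤ psum n K gy.1 + gy.2} :=
      measurableSet_le measurable_const (hm1.add measurable_snd)
    exact ((e1.inter e2).inter e3)
  -- identify the two events
  have hmemhit : ∀ ω, (a ≤ psum n K (A ω) ∧ ∀ J < K, psum n J (A ω) < a) ↔ ω ∈ hitE B p a k := by
    intro ω
    have hWk : psum n K (A ω) = Wd B p k ω := by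
      rw [hpsum ω K le_rfl]
    constructor
    · rintro ⟨h1, h2⟩
      refine ⟨by rwa [hWk] at h1, fun j hj => ?_⟩
      have hjK : (j : ℕ) < K := hj
      have := h2 (j : ℕ) hjK
      rwa [hpsum ω (j : ℕ) (le_of_lt hjK)] at this
    · rintro ⟨h1, h2⟩
      refine ⟨by rwa [hWk], fun J hJ => ?_⟩
      rw [hpsum ω J (le_of_lt hJ)]
      exact h2 ⟨J, by omega⟩ (by simpa [Fin.lt_def] using hJ)
  have hset1 : {ω | (A ω, Y ω) ∈ C} = hitE B p a k ∩ {ω | c ≤ Wd B p (Fin.last n) ω} := by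
    ext ω
    simp only [hCdef, Set.mem_setOf_eq, Set.mem_inter_iff]
    rw [← hmemhit ω]
    have : psum n K (A ω) + Y ω = Wd B p (Fin.last n) ω := by
      rw [hpsum ω K le_rfl, hWlast ω]
    rw [this]
  have hset2 : {ω | (A ω, -Y ω) ∈ C}
      = hitE B p a k ∩ {ω | c ≤ 2 * Wd B p k ω - Wd B p (Fin.last n) ω} := by
    ext ω
    simp only [hCdef, Set.mem_setOf_eq, Set.mem_inter_iff]
    rw [← hmemhit ω]
    have hWk : psum n K (A ω) = Wd B p k ω := by
      rw [hpsum ω K le_rfl]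
    have : psum n K (A ω) + (-Y ω) = 2 * Wd B p k ω - Wd B p (Fin.last n) ω := by
      rw [hWk, hWlast ω]; ring
    rw [this]
  have := reflect_pair hB p hp hp0 K hK hC
  rw [← hset1, ← hset2]
  exact this

lemma disc_upper (hB : IsStandardBM P B) {n : ℕ} {p : Fin (n + 1) → ℝ}
    (hp : Monotone p) (hp0 : p 0 = 0) (a' b' : ℝ) :
    P {ω | (∃ j, a' ≤ Wd B p j ω) ∧ Wd B p (Fin.last n) ω ≤ b'}
      ≤ P {ω | 2 * a' - b' ≤ Wd B p (Fin.last n) ω} := by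
  classical
  set L := {ω | Wd B p (Fin.last n) ω ≤ b'} with hL
  set R := {ω | 2 * a' - b' ≤ Wd B p (Fin.last n) ω} with hR
  have hLm : MeasurableSet L := measurableSet_le (measurable_Wd hB p _) measurable_const
  have hRm : MeasurableSet R := measurableSet_le measurable_const (measurable_Wd hB p _)
  have hset : {ω | (∃ j, a' ≤ Wd B p j ω) ∧ Wd B p (Fin.last n) ω ≤ b'}
      = ⋃ k, (hitE B p a' k ∩ L) := by
    rw [← Set.iUnion_inter, hitE_union]
    rfl
  rw [hset]
  have hd1 : Pairwise (Function.onFun Disjoint fun k => hitE B p a' k ∩ L) :=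
    fun k k' h => Set.disjoint_left.mpr
      (fun w hw hw' => Set.disjoint_left.mp (hitE_disjoint B p a' h) hw.1 hw'.1)
  have hd2 : Pairwise (Function.onFun Disjoint fun k => hitE B p a' k ∩ R) :=
    fun k k' h => Set.disjoint_left.mpr
      (fun w hw hw' => Set.disjoint_left.mp (hitE_disjoint B p a' h) hw.1 hw'.1)
  rw [measure_iUnion hd1 (fun k => (measurableSet_hitE hB p a' k).inter hLm)]
  have hstep : ∀ k, P (hitE B p a' k ∩ L) ≤ P (hitE B p a' k ∩ R) := by
    intro k
    have hsub : hitE B p a' k ∩ L ⊆ hitE B p a' k ∩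
        {ω | 2 * a' - b' ≤ 2 * Wd B p k ω - Wd B p (Fin.last n) ω} := by
      rintro ω ⟨h1, h2⟩
      exact ⟨h1, by simp only [Set.mem_setOf_eq]; have := h1.1; simp only [hL,
        Set.mem_setOf_eq] at h2; linarith⟩
    calc P (hitE B p a' k ∩ L) ≤ P (hitE B p a' k ∩
        {ω | 2 * a' - b' ≤ 2 * Wd B p k ω - Wd B p (Fin.last n) ω}) := measure_mono hsub
      _ = P (hitE B p a' k ∩ R) := (disc_refl_eq hB hp hp0 a' (2 * a' - b') k).symm
  calc (∑' k, P (hitE B p a' k ∩ L)) ≤ ∑' k, P (hitE B p a' k ∩ R) :=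
        ENNReal.tsum_le_tsum hstep
    _ = P (⋃ k, (hitE B p a' k ∩ R)) :=
        (measure_iUnion hd2 (fun k => (measurableSet_hitE hB p a' k).inter hRm)).symm
    _ ≤ P R := measure_mono (Set.iUnion_subset fun k => Set.inter_subset_right)

lemma disc_lower (hB : IsStandardBM P B) {n : ℕ} {p : Fin (n + 1) → ℝ}
    (hp : Monotone p) (hp0 : p 0 = 0) {a b : ℝ} (hba : b < a) :
    P {ω | 2 * a - b ≤ Wd B p (Fin.last n) ω}
      = P (⋃ k, (hitE B p a k ∩ {ω | Wd B p (Fin.last n) ω ≤ 2 * Wd B p k ω - (2 * a - b)})) := by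
  classical
  set R := {ω | 2 * a - b ≤ Wd B p (Fin.last n) ω} with hR
  have hRm : MeasurableSet R := measurableSet_le measurable_const (measurable_Wd hB p _)
  have hset : R = ⋃ k, (hitE B p a k ∩ R) := by
    rw [← Set.iUnion_inter, hitE_union]
    ext ω
    simp only [Set.mem_inter_iff, Set.mem_setOf_eq, hR]
    constructor
    · intro hω
      exact ⟨⟨Fin.last n, by linarith⟩, hω⟩
    · exact fun h => h.2
  have hd2 : Pairwise (Function.onFun Disjoint fun k => hitE B p a k ∩ R) :=
    fun k k' h => Set.disjoint_left.mpr
      (fun w hw hw' => Set.disjoint_left.mp (hitE_disjoint B p a h) hw.1 hw'.1)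
  have hGm : ∀ k, MeasurableSet {ω | Wd B p (Fin.last n) ω ≤ 2 * Wd B p k ω - (2 * a - b)} :=
    fun k => measurableSet_le (measurable_Wd hB p _)
      (((measurable_Wd hB p k).const_mul 2).sub measurable_const)
  have hd3 : Pairwise (Function.onFun Disjoint fun k => hitE B p a k
      ∩ {ω | Wd B p (Fin.last n) ω ≤ 2 * Wd B p k ω - (2 * a - b)}) :=
    fun k k' h => Set.disjoint_left.mpr
      (fun w hw hw' => Set.disjoint_left.mp (hitE_disjoint B p a h) hw.1 hw'.1)
  conv_lhs => rw [hset]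
  rw [measure_iUnion hd2 (fun k => (measurableSet_hitE hB p a k).inter hRm),
    measure_iUnion hd3 (fun k => (measurableSet_hitE hB p a k).inter (hGm k))]
  congr 1
  funext k
  have h1 : hitE B p a k ∩ R
      = hitE B p a k ∩ {ω | 2 * a - b ≤ Wd B p (Fin.last n) ω} := rfl
  rw [h1, disc_refl_eq hB hp hp0 a (2 * a - b) k]
  have h2 : hitE B p a k ∩ {ω | 2 * a - b ≤ 2 * Wd B p k ω - Wd B p (Fin.last n) ω}
      = hitE B p a k ∩ {ω | Wd B p (Fin.last n) ω ≤ 2 * Wd B p k ω - (2 * a - b)} := by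
    ext ω
    constructor
    · rintro ⟨hh1, hh2⟩
      exact ⟨hh1, by simp only [Set.mem_setOf_eq] at hh2 ⊢; linarith⟩
    · rintro ⟨hh1, hh2⟩
      exact ⟨hh1, by simp only [Set.mem_setOf_eq] at hh2 ⊢; linarith⟩
  rw [h2]

/-! ### Dyadic grid -/

noncomputable def dy (t : ℝ) (m j : ℕ) : ℝ := (j : ℝ) * t / 2 ^ m

lemma dy_zero (t : ℝ) (m : ℕ) : dy t m 0 = 0 := by simp [dy]

lemma dy_last (t : ℝ) (m : ℕ) : dy t m (2 ^ m) = t := by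
  unfold dy; field_simp
  push_cast; ring

lemma dy_mono {t : ℝ} (ht : 0 ≤ t) (m : ℕ) : Monotone (dy t m) := by
  intro j j' h
  have hc : (j : ℝ) ≤ (j' : ℝ) := by exact_mod_cast h
  unfold dy
  gcongr

lemma dy_nonneg {t : ℝ} (ht : 0 ≤ t) (m j : ℕ) : 0 ≤ dy t m j := by
  rw [← dy_zero t m]; exact dy_mono ht m (Nat.zero_le j)

lemma dy_le_t {t : ℝ} (ht : 0 ≤ t) {m j : ℕ} (hj : j ≤ 2 ^ m) : dy t m j ≤ t :=
  (dy_mono ht m hj).trans_eq (dy_last t m)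

lemma dy_succ_level (t : ℝ) (m j : ℕ) : dy t (m + 1) (2 * j) = dy t m j := by
  unfold dy
  push_cast
  rw [pow_succ]
  field_simp

lemma dy_add_level (t : ℝ) (m₀ m j : ℕ) : dy t (m₀ + m) (j * 2 ^ m) = dy t m₀ j := by
  unfold dy
  push_cast
  rw [pow_add]
  field_simp

/-- If the supremum over `[0,t]` reaches `a`, some dyadic point nearly reaches it. -/
lemma ptwise_upper {f : ℝ → ℝ} (hf : Continuous f) {t a ε : ℝ} (ht : 0 < t) (hε : 0 < ε)
    (hrm : a ≤ sSup (f '' Set.Icc 0 t)) : ∃ m : ℕ, ∃ j ≤ 2 ^ m, a - ε ≤ f (dy t m j) := by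
  have hcpt : IsCompact (f '' Set.Icc 0 t) := (isCompact_Icc).image hf
  have hne : (f '' Set.Icc 0 t).Nonempty := ⟨f 0, Set.mem_image_of_mem f ⟨le_refl 0, ht.le⟩⟩
  obtain ⟨s₀, hs₀, hfs₀⟩ := hcpt.sSup_mem hne
  have hfs₀a : a ≤ f s₀ := by rw [hfs₀]; exact hrm
  have hopen : IsOpen (f ⁻¹' Set.Ioi (a - ε)) := (isOpen_Ioi).preimage hf
  have hs₀mem : s₀ ∈ f ⁻¹' Set.Ioi (a - ε) := by
    simp only [Set.mem_preimage, Set.mem_Ioi]; linarith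
  obtain ⟨δ, hδ, hball⟩ := Metric.isOpen_iff.mp hopen s₀ hs₀mem
  obtain ⟨m, hm⟩ := pow_unbounded_of_one_lt (t / δ) (by norm_num : (1:ℝ) < 2)
  have h2m : (0:ℝ) < 2 ^ m := by positivity
  have hspace : t / 2 ^ m < δ := by
    rw [div_lt_iff₀ h2m]
    have := (div_lt_iff₀ hδ).mp hm
    linarith
  set x : ℝ := s₀ * 2 ^ m / t with hx
  have hx0 : 0 ≤ x := div_nonneg (mul_nonneg hs₀.1 h2m.le) ht.le
  set j : ℕ := ⌊x⌋₊ with hj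
  have hjx : (j : ℝ) ≤ x := Nat.floor_le hx0
  have hxj1 : x < (j : ℝ) + 1 := Nat.lt_floor_add_one x
  have hdy_le : dy t m j ≤ s₀ := by
    have h1 : (j : ℝ) * t ≤ s₀ * 2 ^ m := by
      have := (le_div_iff₀ ht).mp hjx
      linarith
    rw [dy, div_le_iff₀ h2m]
    linarith
  have hdy_close : s₀ - dy t m j < t / 2 ^ m := by
    have h2 : s₀ * 2 ^ m < ((j : ℝ) + 1) * t := by
      have := (div_lt_iff₀ ht).mp hxj1
      linarith
    rw [dy, sub_lt_iff_lt_add, ← add_div, lt_div_iff₀ h2m]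
    linarith
  have hjle : j ≤ 2 ^ m := by
    have hxle : x ≤ (2 : ℝ) ^ m := by
      rw [hx, div_le_iff₀ ht]
      have : s₀ ≤ t := hs₀.2
      nlinarith
    exact_mod_cast hjx.trans hxle
  refine ⟨m, j, hjle, ?_⟩
  have hmem : dy t m j ∈ Metric.ball s₀ δ := by
    rw [Metric.mem_ball, Real.dist_eq, abs_of_nonpos (by linarith)]
    linarith
  have := hball hmem
  simp only [Set.mem_preimage, Set.mem_Ioi] at this
  linarith

/-- Pointwise limit argument for the lower bound: if along infinitely many dyadic levels the
reflected event occurs, then the path reaches `a` and ends below `b`. -/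
lemma ptwise_lower {f : ℝ → ℝ} (hf : Continuous f) (hf0 : f 0 = 0) {t a b : ℝ}
    (ht : 0 < t) (ha : 0 < a) {M : Set ℕ} (hM : M.Infinite)
    (hG : ∀ m ∈ M, ∃ k : ℕ, k ≤ 2 ^ m ∧ a ≤ f (dy t m k) ∧ (∀ j < k, f (dy t m j) < a) ∧
      f t ≤ 2 * f (dy t m k) - (2 * a - b)) :
    a ≤ sSup (f '' Set.Icc 0 t) ∧ f t ≤ b := by
  classical
  obtain ⟨m₀, hm₀⟩ := hM.nonempty
  obtain ⟨k₀, hk₀, hak₀, -, -⟩ := hG m₀ hm₀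
  have hQ : ∀ m : ℕ, ∃ j : ℕ, j ≤ 2 ^ (m₀ + m) ∧ a ≤ f (dy t (m₀ + m) j) := by
    intro m
    refine ⟨k₀ * 2 ^ m, ?_, ?_⟩
    · calc k₀ * 2 ^ m ≤ 2 ^ m₀ * 2 ^ m := by gcongr
        _ = 2 ^ (m₀ + m) := (pow_add 2 m₀ m).symm
    · rw [dy_add_level]; exact hak₀
  set k' : ℕ → ℕ := fun m => Nat.find (hQ m) with hk'
  set σ : ℕ → ℝ := fun m => dy t (m₀ + m) (k' m) with hσ
  have hspec : ∀ m, k' m ≤ 2 ^ (m₀ + m) ∧ a ≤ f (σ m) := fun m => Nat.find_spec (hQ m)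
  have hσ0 : ∀ m, 0 ≤ σ m := fun m => dy_nonneg ht.le _ _
  have hσt : ∀ m, σ m ≤ t := fun m => dy_le_t ht.le (hspec m).1
  have hσanti : Antitone σ := by
    refine antitone_nat_of_succ_le fun m => ?_
    have hq : 2 * k' m ≤ 2 ^ (m₀ + (m + 1)) ∧ a ≤ f (dy t (m₀ + (m + 1)) (2 * k' m)) := by
      constructor
      · have : m₀ + (m + 1) = (m₀ + m) + 1 := by omega
        rw [this, pow_succ]
        have := (hspec m).1
        omega
      · have : m₀ + (m + 1) = (m₀ + m) + 1 := by omega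
        rw [this, dy_succ_level]
        exact (hspec m).2
    have hfind : k' (m + 1) ≤ 2 * k' m := Nat.find_min' (hQ (m + 1)) hq
    calc σ (m + 1) = dy t (m₀ + (m + 1)) (k' (m + 1)) := rfl
      _ ≤ dy t (m₀ + (m + 1)) (2 * k' m) := dy_mono ht.le _ hfind
      _ = dy t ((m₀ + m) + 1) (2 * k' m) := by rw [show m₀ + (m + 1) = (m₀ + m) + 1 by omega]
      _ = dy t (m₀ + m) (k' m) := dy_succ_level t _ _
      _ = σ m := rfl
  have hbdd : BddBelow (Set.range σ) := ⟨0, by rintro x ⟨m, rfl⟩; exact hσ0 m⟩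
  set sl : ℝ := ⨅ m, σ m with hsl
  have htd : Filter.Tendsto σ Filter.atTop (nhds sl) := tendsto_atTop_ciInf hσanti hbdd
  have hfc : Filter.Tendsto (fun m => f (σ m)) Filter.atTop (nhds (f sl)) :=
    (hf.tendsto sl).comp htd
  have hainf : a ≤ f sl :=
    ge_of_tendsto hfc (Filter.Eventually.of_forall fun m => (hspec m).2)
  have hsl0 : 0 ≤ sl := le_ciInf hσ0
  have hslle : ∀ m, sl ≤ σ m := fun m => ciInf_le hbdd m
  -- f sl = a
  have hfa : f sl = a := by
    by_contra hne
    have hlt : a < f sl := lt_of_le_of_ne hainf (Ne.symm hne)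
    have hσpos : 0 < sl := by
      rcases hsl0.lt_or_eq with h | h
      · exact h
      · exfalso; rw [← h, hf0] at hlt; linarith
    have hopen : IsOpen (f ⁻¹' Set.Ioi a) := (isOpen_Ioi).preimage hf
    obtain ⟨δ, hδ, hball⟩ := Metric.isOpen_iff.mp hopen sl (by
      simp only [Set.mem_preimage, Set.mem_Ioi]; exact hlt)
    set δ' : ℝ := min δ sl with hδ'def
    have hδ' : 0 < δ' := lt_min hδ hσpos
    obtain ⟨m, hm⟩ := pow_unbounded_of_one_lt (t / δ') (by norm_num : (1:ℝ) < 2)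
    set Mx : ℕ := m₀ + m with hMx
    have h2M : (0:ℝ) < 2 ^ Mx := by positivity
    have hspace : t / 2 ^ Mx < δ' := by
      rw [div_lt_iff₀ h2M]
      have h1 : t < 2 ^ m * δ' := (div_lt_iff₀ hδ').mp hm
      have h2 : (2:ℝ) ^ m ≤ 2 ^ Mx := by
        apply pow_le_pow_right₀ (by norm_num)
        omega
      nlinarith
    set x : ℝ := sl * 2 ^ Mx / t with hx
    have hx0 : 0 < x := by positivity
    have hceil1 : 1 ≤ ⌈x⌉₊ := Nat.one_le_ceil_iff.mpr hx0
    set j : ℕ := ⌈x⌉₊ - 1 with hj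
    have hjcast : (j : ℝ) = (⌈x⌉₊ : ℝ) - 1 := by
      rw [hj]; push_cast [hceil1]; ring
    have hjx : (j : ℝ) < x := by
      rw [hjcast]
      have := Nat.ceil_lt_add_one hx0.le
      linarith
    have hxj1 : x ≤ (j : ℝ) + 1 := by
      rw [hjcast]
      have := Nat.le_ceil x
      linarith
    have hdy_lt : dy t Mx j < sl := by
      have h1 : (j : ℝ) * t < sl * 2 ^ Mx := by
        have := (lt_div_iff₀ ht).mp hjx
        linarith
      rw [dy, div_lt_iff₀ h2M]
      linarith
    have hdy_close : sl - dy t Mx j ≤ t / 2 ^ Mx := by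
      have h2 : sl * 2 ^ Mx ≤ ((j : ℝ) + 1) * t := by
        have := (div_le_iff₀ ht).mp hxj1
        linarith
      rw [dy, sub_le_iff_le_add, ← add_div, le_div_iff₀ h2M]
      linarith
    have hjle : j ≤ 2 ^ Mx := by
      have hxle : (j : ℝ) < (2 : ℝ) ^ Mx := by
        have hσt' : sl ≤ t := (hslle 0).trans (hσt 0)
        have : x ≤ (2 : ℝ) ^ Mx := by
          rw [hx, div_le_iff₀ ht]; nlinarith
        linarith
      have : (j : ℝ) < ((2 ^ Mx : ℕ) : ℝ) := by push_cast; exact hxle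
      exact_mod_cast this.le
    have hfdy : a < f (dy t Mx j) := by
      have hmem : dy t Mx j ∈ Metric.ball sl δ := by
        rw [Metric.mem_ball, Real.dist_eq, abs_of_nonpos (by linarith)]
        have : δ' ≤ δ := min_le_left _ _
        linarith
      have := hball hmem
      simpa using this
    have hfind : k' m ≤ j := Nat.find_min' (hQ m) ⟨hjle, hfdy.le⟩
    have : σ m ≤ dy t Mx j := dy_mono ht.le _ hfind
    have : sl ≤ dy t Mx j := (hslle m).trans this
    linarith
  -- conclusion, part 2 : f t ≤ b
  have hft : f t ≤ b := by
    have key : ∀ ε : ℝ, 0 < ε → f t ≤ b + 2 * ε := by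
      intro ε hε
      have hev : ∀ᶠ m in Filter.atTop, f (σ m) < a + ε :=
        hfc.eventually_lt_const (by rw [hfa]; linarith)
      obtain ⟨N, hN⟩ := Filter.eventually_atTop.mp hev
      obtain ⟨m', hm'M, hm'gt⟩ := hM.exists_gt (m₀ + N)
      set m : ℕ := m' - m₀ with hmdef
      have hmm : m₀ + m = m' := by omega
      obtain ⟨k, hk2, hak, hfirst, hrefl⟩ := hG m' hm'M
      have hkk : k' m = k := by
        have h1 : k' m ≤ k := Nat.find_min' (hQ m) (by rw [hmm]; exact ⟨hk2, hak⟩)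
        rcases h1.lt_or_eq with h | h
        · exfalso
          have hspec2 := (hspec m).2
          rw [hσ] at hspec2
          simp only at hspec2
          rw [hmm] at hspec2
          exact absurd hspec2 (not_le.mpr (hfirst _ h))
        · exact h
      have hσm : σ m = dy t m' k := by rw [hσ]; simp only; rw [hmm, hkk]
      have hσval : f (σ m) < a + ε := hN m (by omega)
      rw [hσm] at hσval
      linarith
    by_contra hcon
    push_neg at hcon
    have := key ((f t - b) / 4) (by linarith)
    linarith
  refine ⟨?_, hft⟩
  have hbddAbove : BddAbove (f '' Set.Icc 0 t) := ((isCompact_Icc).image hf).bddAbove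
  calc a ≤ f (σ 0) := (hspec 0).2
    _ ≤ sSup (f '' Set.Icc 0 t) := le_csSup hbddAbove ⟨σ 0, ⟨hσ0 0, hσt 0⟩, rfl⟩

end BMRefl

open BMRefl in
theorem stmt_9 {Ω : Type*} [MeasurableSpace Ω] (P : Measure Ω) (B : ℝ → Ω → ℝ)
    (hB : IsStandardBM P B) (t a b : ℝ) (ht : 0 < t) (hab : max b 0 < a) :
    P {ω | a ≤ runMax B t ω ∧ B t ω ≤ b} = P {ω | 2 * a - b ≤ B t ω} := by
  classical
  haveI := hB.isProb
  have ha : 0 < a := lt_of_le_of_lt (le_max_right b 0) hab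
  have hba : b < a := lt_of_le_of_lt (le_max_left b 0) hab
  -- the dyadic partitions
  set pm : (m : ℕ) → Fin (2 ^ m + 1) → ℝ := fun m j => dy t m (j : ℕ) with hpm
  have hpmono : ∀ m, Monotone (pm m) := by
    intro m j j' hj
    exact dy_mono ht.le m (by exact_mod_cast hj)
  have hpzero : ∀ m, pm m 0 = 0 := fun m => by simp [hpm, dy_zero]
  have hplast : ∀ m, pm m (Fin.last (2 ^ m)) = t := fun m => by
    simp only [hpm, Fin.val_last]; exact dy_last t m
  -- the a.s. good set
  set good : Set Ω := {ω | B 0 ω = 0 ∧ Continuous fun s => B s ω} with hgoodset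
  have hgood : P goodᶜ = 0 := by
    have h := (hB.init).and hB.cont
    rw [MeasureTheory.ae_iff] at h
    convert h using 2
    rfl
  have hPint : ∀ S : Set Ω, P (S ∩ good) = P S := fun S => measure_inter_conull hgood
  have hswap : ∀ S S' : Set Ω, S ∩ good = S' ∩ good → P S = P S' := fun S S' h => by
    rw [← hPint S, h, hPint S']
  -- translation between B t and Wd at dyadic levels
  have hWlast : ∀ m (ω : Ω), ω ∈ good →
      Wd B (pm m) (Fin.last (2 ^ m)) ω = B t ω := by
    intro m ω hω
    rw [Wd, hplast m, hω.1, sub_zero]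
  have hlastset : ∀ (m : ℕ) (c : ℝ),
      {ω | c ≤ Wd B (pm m) (Fin.last (2 ^ m)) ω} ∩ good = {ω | c ≤ B t ω} ∩ good := by
    intro m c
    ext ω
    simp only [Set.mem_inter_iff, Set.mem_setOf_eq, and_congr_left_iff]
    intro hω
    rw [hWlast m ω hω]
  refine le_antisymm ?_ ?_
  · -- upper bound
    set c : ℝ := (a - max b 0) / 2 with hc
    have hcpos : 0 < c := by simp only [hc]; linarith
    have hupper : ∀ i : ℕ, P {ω | a ≤ runMax B t ω ∧ B t ω ≤ b}
        ≤ P {ω | 2 * (a - c / (i + 1)) - b ≤ B t ω} := by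
      intro i
      set ε : ℝ := c / (i + 1) with hε
      have hεpos : 0 < ε := by positivity
      set D : ℕ → Set Ω := fun m =>
        {ω | (∃ j, a - ε ≤ Wd B (pm m) j ω) ∧ Wd B (pm m) (Fin.last (2 ^ m)) ω ≤ b} with hD
      have hDmeas : ∀ m, MeasurableSet (D m) := by
        intro m
        have h1 : MeasurableSet {ω | ∃ j, a - ε ≤ Wd B (pm m) j ω} := by
          have : {ω | ∃ j, a - ε ≤ Wd B (pm m) j ω}
              = ⋃ j, {ω | a - ε ≤ Wd B (pm m) j ω} := by ext ω; simp
          rw [this]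
          exact MeasurableSet.iUnion fun j =>
            measurableSet_le measurable_const (measurable_Wd hB _ j)
        exact h1.inter (measurableSet_le (measurable_Wd hB _ _) measurable_const)
      have hDmono : Monotone D := by
        refine monotone_nat_of_le_succ fun m => ?_
        rintro ω ⟨⟨j, hj⟩, hlast⟩
        refine ⟨⟨⟨2 * (j : ℕ), by have := j.isLt; omega⟩, ?_⟩, ?_⟩
        · rw [Wd] at hj ⊢
          simp only [hpm] at hj ⊢
          rw [dy_succ_level]
          exact hj
        · rw [Wd, hplast] at hlast ⊢
          exact hlast
      have hsub : {ω | a ≤ runMax B t ω ∧ B t ω ≤ b} ∩ good ⊆ ⋃ m, D m := by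
        rintro ω ⟨⟨hra, hbt⟩, h0, hcont⟩
        have hrm : a ≤ sSup ((fun s => B s ω) '' Set.Icc 0 t) := hra
        obtain ⟨m, j, hjle, hfj⟩ := ptwise_upper hcont ht hεpos hrm
        refine Set.mem_iUnion.mpr ⟨m, ⟨⟨j, by omega⟩, ?_⟩, ?_⟩
        · rw [Wd]
          simp only [hpm]
          rw [h0, sub_zero]
          exact hfj
        · rw [Wd, hplast, h0, sub_zero]
          exact hbt
      calc P {ω | a ≤ runMax B t ω ∧ B t ω ≤ b}
          = P ({ω | a ≤ runMax B t ω ∧ B t ω ≤ b} ∩ good) := (hPint _).symm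
        _ ≤ P (⋃ m, D m) := measure_mono hsub
        _ = ⨆ m, P (D m) := Directed.measure_iUnion (hDmono.directed_le)
        _ ≤ P {ω | 2 * (a - ε) - b ≤ B t ω} := by
            refine iSup_le fun m => ?_
            calc P (D m) ≤ P {ω | 2 * (a - ε) - b ≤ Wd B (pm m) (Fin.last (2 ^ m)) ω} :=
                  disc_upper hB (hpmono m) (hpzero m) (a - ε) b
              _ = P {ω | 2 * (a - ε) - b ≤ B t ω} := hswap _ _ (hlastset m _)
    -- pass to the limit in i
    have hanti : Antitone fun i : ℕ => {ω | 2 * (a - c / (i + 1)) - b ≤ B t ω} := by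
      intro i i' hii ω hω
      simp only [Set.mem_setOf_eq] at hω ⊢
      have h1 : c / ((i' : ℝ) + 1) ≤ c / ((i : ℝ) + 1) := by
        have hle : ((i : ℝ) + 1) ≤ ((i' : ℝ) + 1) := by
          have : (i : ℝ) ≤ (i' : ℝ) := Nat.cast_le.mpr hii
          linarith
        gcongr
      linarith
    have hiInter : (⋂ i : ℕ, {ω | 2 * (a - c / (i + 1)) - b ≤ B t ω})
        = {ω | 2 * a - b ≤ B t ω} := by
      ext ω
      simp only [Set.mem_iInter, Set.mem_setOf_eq]
      constructor
      · intro h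
        by_contra hcon
        push_neg at hcon
        set d : ℝ := 2 * a - b - B t ω with hd
        have hdpos : 0 < d := by simp only [hd]; linarith
        obtain ⟨i, hi⟩ := exists_nat_gt (2 * c / d)
        have hi1 : 2 * c / d < (i : ℝ) + 1 := by linarith
        have h2 : 2 * (c / ((i : ℝ) + 1)) < d := by
          rw [← mul_div_assoc, div_lt_iff₀ (by positivity : (0:ℝ) < (i:ℝ) + 1)]
          have := (div_lt_iff₀ hdpos).mp hi1
          linarith
        have := h i
        simp only [hd] at h2
        linarith
      · intro h i
        have : 0 < c / ((i : ℝ) + 1) := by positivity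
        linarith
    have hmeas : ∀ i : ℕ, MeasurableSet {ω | 2 * (a - c / (i + 1)) - b ≤ B t ω} := fun i =>
      measurableSet_le measurable_const (hB.meas t)
    calc P {ω | a ≤ runMax B t ω ∧ B t ω ≤ b}
        ≤ ⨅ i : ℕ, P {ω | 2 * (a - c / (i + 1)) - b ≤ B t ω} := le_iInf hupper
      _ = P (⋂ i : ℕ, {ω | 2 * (a - c / (i + 1)) - b ≤ B t ω}) :=
          (Directed.measure_iInter (fun i => (hmeas i).nullMeasurableSet) (hanti.directed_ge)
            ⟨0, measure_ne_top P _⟩).symm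
      _ = P {ω | 2 * a - b ≤ B t ω} := by rw [hiInter]
  · -- lower bound
    set G : ℕ → Set Ω := fun m => ⋃ k, (hitE B (pm m) a k ∩
      {ω | Wd B (pm m) (Fin.last (2 ^ m)) ω ≤ 2 * Wd B (pm m) k ω - (2 * a - b)}) with hG
    have hGmeas : ∀ m, MeasurableSet (G m) := fun m =>
      MeasurableSet.iUnion fun k => (measurableSet_hitE hB _ a k).inter
        (measurableSet_le (measurable_Wd hB _ _)
          (((measurable_Wd hB _ k).const_mul 2).sub measurable_const))
    have hGP : ∀ m, P {ω | 2 * a - b ≤ B t ω} = P (G m) := by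
      intro m
      calc P {ω | 2 * a - b ≤ B t ω}
          = P {ω | 2 * a - b ≤ Wd B (pm m) (Fin.last (2 ^ m)) ω} :=
            hswap _ _ (hlastset m _).symm
        _ = P (G m) := disc_lower hB (hpmono m) (hpzero m) hba
    set U : ℕ → Set Ω := fun N => ⋃ m, ⋃ (_ : N ≤ m), G m with hU
    have hUmeas : ∀ N, MeasurableSet (U N) := fun N =>
      MeasurableSet.iUnion fun m => MeasurableSet.iUnion fun _ => hGmeas m
    have hUanti : Antitone U := by
      intro N N' hNN ω hω
      obtain ⟨m, hm, hmem⟩ := Set.mem_iUnion₂.mp hω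
      exact Set.mem_iUnion₂.mpr ⟨m, le_trans hNN hm, hmem⟩
    have hRU : ∀ N, P {ω | 2 * a - b ≤ B t ω} ≤ P (U N) := by
      intro N
      rw [hGP N]
      exact measure_mono (Set.subset_iUnion₂ (s := fun m _ => G m) N le_rfl)
    have hL : P {ω | 2 * a - b ≤ B t ω} ≤ P (⋂ N, U N) := by
      rw [Directed.measure_iInter (fun N => (hUmeas N).nullMeasurableSet) (hUanti.directed_ge) ⟨0, measure_ne_top P _⟩]
      exact le_iInf hRU
    have hsub : (⋂ N, U N) ∩ good ⊆ {ω | a ≤ runMax B t ω ∧ B t ω ≤ b} := by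
      rintro ω ⟨hLmem, h0, hcont⟩
      set f : ℝ → ℝ := fun s => B s ω with hf
      set M : Set ℕ := {m | ω ∈ G m} with hM
      have hMinf : M.Infinite := by
        apply Set.infinite_of_forall_exists_gt
        intro N
        have := Set.mem_iInter.mp hLmem (N + 1)
        obtain ⟨m, hm, hmem⟩ := Set.mem_iUnion₂.mp this
        exact ⟨m, hmem, by omega⟩
      have hGfacts : ∀ m ∈ M, ∃ k : ℕ, k ≤ 2 ^ m ∧ a ≤ f (dy t m k) ∧
          (∀ j < k, f (dy t m j) < a) ∧ f t ≤ 2 * f (dy t m k) - (2 * a - b) := by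
        intro m hm
        obtain ⟨k, hk⟩ := Set.mem_iUnion.mp hm
        obtain ⟨⟨hak, hfirst⟩, hrefl⟩ := hk
        have hWd : ∀ j : Fin (2 ^ m + 1), Wd B (pm m) j ω = f (dy t m (j : ℕ)) := by
          intro j
          rw [Wd, h0, sub_zero]
        refine ⟨(k : ℕ), by omega, ?_, ?_, ?_⟩
        · rw [← hWd k]; exact hak
        · intro j hj
          have hjlt : j < 2 ^ m + 1 := by omega
          have := hfirst ⟨j, hjlt⟩ (by simpa [Fin.lt_def] using hj)
          rwa [hWd] at this
        · have hlast : Wd B (pm m) (Fin.last (2 ^ m)) ω = f t := by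
            rw [Wd, hplast, h0, sub_zero]
          simp only [Set.mem_setOf_eq] at hrefl
          rw [hlast, hWd k] at hrefl
          exact hrefl
      obtain ⟨h1, h2⟩ := ptwise_lower hcont h0 ht ha hMinf hGfacts
      exact ⟨h1, h2⟩
    calc P {ω | 2 * a - b ≤ B t ω} ≤ P (⋂ N, U N) := hL
      _ = P ((⋂ N, U N) ∩ good) := (hPint _).symm
      _ ≤ P {ω | a ≤ runMax B t ω ∧ B t ω ≤ b} := measure_mono hsub
end

section
/- Fix μ, σ, r > 0 with roots γ₁ > 0 > γ₂ of (σ²/2)γ² + μγ - r = 0, and let g(x) = (γ₁·e^{γ₂x} - γ₂·e^{γ₁x})/(γ₁ - γ₂). Let π : ℝ → ℝ be C², strictly concave, with maximum at q̄ > 0, and let L, c > 0 with π(q̄) - L + c > 0. If a C¹ function z : (m₁, q̄) → (-∞, 0) satisfies 1 + z'(m) = (g(-z(m))/g'(-z(m)))·(π'(m)/(π(m) - L + c)), z(m) → 0 as m → q̄, and ℓ := lim_{m→q̄} z'(m) exists, then ℓ satisfies ℓ + ℓ² = π''(q̄)/(γ₁γ₂·(π(q̄) - L + c)), hence ℓ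 = √(π''(q̄)/(γ₁γ₂(π(q̄) - L + c)) + 1/4) - 1/2 ≥ 0. -/
theorem stmt_15 (μ σ r : ℝ) (hμ : 0 < μ) (hσ : 0 < σ) (hr : 0 < r)
    (γ₁ γ₂ : ℝ) (h1 : 0 < γ₁) (h2 : γ₂ < 0)
    (hroot1 : σ ^ 2 / 2 * γ₁ ^ 2 + μ * γ₁ - r = 0)
    (hroot2 : σ ^ 2 / 2 * γ₂ ^ 2 + μ * γ₂ - r = 0)
    (g : ℝ → ℝ)
    (hg : ∀ x, g x = (γ₁ * Real.exp (γ₂ * x) - γ₂ * Real.exp (γ₁ * x)) / (γ₁ - γ₂))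
    (π : ℝ → ℝ) (hπ : ContDiff ℝ 2 π) (hconc : StrictConcaveOn ℝ Set.univ π)
    (qbar : ℝ) (hqbar : 0 < qbar) (hmax : IsMaxOn π Set.univ qbar)
    (hπ' : deriv π qbar = 0) (hπ'' : deriv (deriv π) qbar < 0)
    (L c : ℝ) (hL : 0 < L) (hc : 0 < c) (hpos : 0 < π qbar - L + c)
    (m₁ : ℝ) (hm₁ : m₁ < qbar) (z : ℝ → ℝ)
    (hzneg : ∀ m ∈ Set.Ioo m₁ qbar, z m < 0)
    (hode : ∀ m ∈ Set.Ioo m₁ qbar,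
      HasDerivAt z
        (g (-z m) / deriv g (-z m) * (deriv π m / (π m - L + c)) - 1) m)
    (hz0 : Filter.Tendsto z (nhdsWithin qbar (Set.Iio qbar)) (nhds 0))
    (ℓ : ℝ)
    (hℓ : Filter.Tendsto (deriv z) (nhdsWithin qbar (Set.Iio qbar)) (nhds ℓ)) :
    ℓ + ℓ ^ 2 = deriv (deriv π) qbar / (γ₁ * γ₂ * (π qbar - L + c)) ∧
    ℓ = Real.sqrt (deriv (deriv π) qbar / (γ₁ * γ₂ * (π qbar - L + c)) + 1 / 4) - 1 / 2 ∧
    0 ≤ ℓ := by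
  have hγne : γ₁ - γ₂ ≠ 0 := by linarith
  have hγγ : γ₁ * γ₂ < 0 := mul_neg_of_pos_of_neg h1 h2
  have hγγne : γ₁ * γ₂ ≠ 0 := ne_of_lt hγγ
  have hIoo : Set.Ioo m₁ qbar ∈ nhdsWithin qbar (Set.Iio qbar) :=
    Ioo_mem_nhdsLT_of_mem ⟨hm₁, le_refl _⟩
  -- derivative of g
  have hdg : ∀ x : ℝ, HasDerivAt g (γ₁ * γ₂ * (Real.exp (γ₂ * x) - Real.exp (γ₁ * x)) / (γ₁ - γ₂)) x := by
    intro x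
    have h2' : HasDerivAt (fun x : ℝ => Real.exp (γ₂ * x)) (Real.exp (γ₂ * x) * γ₂) x := by
      simpa [Function.comp_def] using (Real.hasDerivAt_exp (γ₂ * x)).comp x ((hasDerivAt_id x).const_mul γ₂)
    have h1' : HasDerivAt (fun x : ℝ => Real.exp (γ₁ * x)) (Real.exp (γ₁ * x) * γ₁) x := by
      simpa [Function.comp_def] using (Real.hasDerivAt_exp (γ₁ * x)).comp x ((hasDerivAt_id x).const_mul γ₁)
    have := (((h2'.const_mul γ₁).sub (h1'.const_mul γ₂)).div_const (γ₁ - γ₂))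
    have hfun : g = fun x => (γ₁ * Real.exp (γ₂ * x) - γ₂ * Real.exp (γ₁ * x)) / (γ₁ - γ₂) :=
      funext hg
    rw [hfun]
    refine this.congr_deriv ?_
    ring
  have hdgval : ∀ x : ℝ, deriv g x = γ₁ * γ₂ * (Real.exp (γ₂ * x) - Real.exp (γ₁ * x)) / (γ₁ - γ₂) :=
    fun x => (hdg x).deriv
  -- L'Hopital : z m / (m - qbar) → ℓ
  have hA : Filter.Tendsto (fun m => z m / (m - qbar)) (nhdsWithin qbar (Set.Iio qbar)) (nhds ℓ) := by
    apply HasDerivAt.lhopital_zero_nhdsLT (g' := fun _ => (1 : ℝ))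
      (g := fun m => m - qbar) (f' := deriv z)
    · filter_upwards [hIoo] with m hm
      exact (hode m hm).differentiableAt.hasDerivAt
    · filter_upwards with m
      simpa using (hasDerivAt_id m).sub_const qbar
    · filter_upwards with m; exact one_ne_zero
    · exact hz0
    · have : Filter.Tendsto (fun m : ℝ => m - qbar) (nhds qbar) (nhds (qbar - qbar)) :=
        (continuous_id.sub continuous_const).tendsto qbar
      simpa using this.mono_left nhdsWithin_le_nhds
    · simpa using hℓ
  -- slope of deriv π at qbar
  have hππ : Differentiable ℝ (deriv π) := by
    have h2π : ContDiff ℝ (1 + 1 : WithTop ℕ∞) π := by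
      norm_num
      exact hπ
    have := (contDiff_succ_iff_deriv.mp h2π).2.2
    exact this.differentiable (by norm_num)
  have hslopeπ : Filter.Tendsto (fun m => deriv π m / (m - qbar)) (nhdsWithin qbar (Set.Iio qbar))
      (nhds (deriv (deriv π) qbar)) := by
    have h := (hππ qbar).hasDerivAt
    rw [hasDerivAt_iff_tendsto_slope] at h
    have h2' := h.mono_left (nhdsWithin_mono _ (fun x (hx : x < qbar) => ne_of_lt hx))
    refine h2'.congr fun m => ?_
    simp [slope_def_field, hπ']
  -- continuity of π m - L + c
  have hπcont : Filter.Tendsto (fun m => π m - L + c) (nhdsWithin qbar (Set.Iio qbar))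
      (nhds (π qbar - L + c)) := by
    have := (hπ.continuous.tendsto qbar).mono_left (nhdsWithin_le_nhds (s := Set.Iio qbar))
    exact (this.sub_const L).add_const c
  -- -z m → 0 from the right
  have hmz : Filter.Tendsto (fun m => -z m) (nhdsWithin qbar (Set.Iio qbar))
      (nhdsWithin 0 (Set.Ioi 0)) := by
    rw [tendsto_nhdsWithin_iff]
    constructor
    · simpa using hz0.neg
    · filter_upwards [hIoo] with m hm
      exact Set.mem_Ioi.mpr (neg_pos.mpr (hzneg m hm))
  -- deriv g y / y → -(γ₁γ₂)
  have hexp : Filter.Tendsto (fun y => (Real.exp (γ₂ * y) - Real.exp (γ₁ * y)) / y)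
      (nhdsWithin 0 (Set.Ioi 0)) (nhds (γ₂ - γ₁)) := by
    have h2' : HasDerivAt (fun y : ℝ => Real.exp (γ₂ * y)) (Real.exp (γ₂ * 0) * γ₂) 0 := by
      simpa [Function.comp_def] using (Real.hasDerivAt_exp (γ₂ * 0)).comp 0 ((hasDerivAt_id 0).const_mul γ₂)
    have h1' : HasDerivAt (fun y : ℝ => Real.exp (γ₁ * y)) (Real.exp (γ₁ * 0) * γ₁) 0 := by
      simpa [Function.comp_def] using (Real.hasDerivAt_exp (γ₁ * 0)).comp 0 ((hasDerivAt_id 0).const_mul γ₁)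
    have h := h2'.sub h1'
    simp only [mul_zero, Real.exp_zero, one_mul] at h
    rw [hasDerivAt_iff_tendsto_slope] at h
    have h2'' := h.mono_left (nhdsWithin_mono _ (fun x (hx : x ∈ Set.Ioi 0) => ne_of_gt hx))
    refine h2''.congr fun y => ?_
    simp [slope_def_field]
  have hdgy : Filter.Tendsto (fun y => deriv g y / y) (nhdsWithin 0 (Set.Ioi 0))
      (nhds (-(γ₁ * γ₂))) := by
    have heq : ∀ y : ℝ, deriv g y / y =
        γ₁ * γ₂ / (γ₁ - γ₂) * ((Real.exp (γ₂ * y) - Real.exp (γ₁ * y)) / y) := by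
      intro y; rw [hdgval y]; ring
    have h := hexp.const_mul (γ₁ * γ₂ / (γ₁ - γ₂))
    have hval : γ₁ * γ₂ / (γ₁ - γ₂) * (γ₂ - γ₁) = -(γ₁ * γ₂) := by
      field_simp
      ring
    rw [hval] at h
    exact h.congr fun y => (heq y).symm
  -- g y → 1
  have hg0 : Filter.Tendsto g (nhdsWithin 0 (Set.Ioi 0)) (nhds 1) := by
    have hfun : g = fun x => (γ₁ * Real.exp (γ₂ * x) - γ₂ * Real.exp (γ₁ * x)) / (γ₁ - γ₂) :=
      funext hg
    have hcont : Continuous g := by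
      rw [hfun]
      exact ((continuous_const.mul (Real.continuous_exp.comp (continuous_const.mul continuous_id))).sub
        (continuous_const.mul (Real.continuous_exp.comp (continuous_const.mul continuous_id)))).div_const _
    have hg0v : g 0 = 1 := by
      rw [hg 0]; simp [div_self hγne]
    have := (hcont.tendsto 0).mono_left (nhdsWithin_le_nhds (s := Set.Ioi (0:ℝ)))
    rwa [hg0v] at this
  -- g y * y / deriv g y → 1 / -(γ₁γ₂)
  have hφ : Filter.Tendsto (fun y => g y * y / deriv g y) (nhdsWithin 0 (Set.Ioi 0))
      (nhds (1 / -(γ₁ * γ₂))) := by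
    have h := hg0.div hdgy (by simpa using hγγne)
    exact h.congr fun y => (div_div_eq_mul_div (g y) (deriv g y) y)
  have hφz : Filter.Tendsto (fun m => g (-z m) * (-z m) / deriv g (-z m))
      (nhdsWithin qbar (Set.Iio qbar)) (nhds (1 / -(γ₁ * γ₂))) := by
    exact hφ.comp hmz
  -- key identity and limits
  have key : Filter.Tendsto (fun m => (1 + deriv z m) * (z m / (m - qbar)))
      (nhdsWithin qbar (Set.Iio qbar)) (nhds ((1 + ℓ) * ℓ)) :=
    (tendsto_const_nhds.add hℓ).mul hA
  have keq : ∀ᶠ m in nhdsWithin qbar (Set.Iio qbar),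
      (1 + deriv z m) * (z m / (m - qbar)) =
      g (-z m) * (-z m) / deriv g (-z m) * (deriv π m / (m - qbar)) * (-1) / (π m - L + c) := by
    filter_upwards [hIoo] with m hm
    rw [(hode m hm).deriv]
    ring
  have key2 : Filter.Tendsto
      (fun m => g (-z m) * (-z m) / deriv g (-z m) * (deriv π m / (m - qbar)) * (-1) / (π m - L + c))
      (nhdsWithin qbar (Set.Iio qbar))
      (nhds (1 / -(γ₁ * γ₂) * deriv (deriv π) qbar * (-1) / (π qbar - L + c))) :=
    ((hφz.mul hslopeπ).mul_const (-1)).div hπcont (ne_of_gt hpos)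
  have huniq : (1 + ℓ) * ℓ = 1 / -(γ₁ * γ₂) * deriv (deriv π) qbar * (-1) / (π qbar - L + c) :=
    tendsto_nhds_unique (key.congr' keq) key2
  have hQne : π qbar - L + c ≠ 0 := ne_of_gt hpos
  have hK : ℓ + ℓ ^ 2 = deriv (deriv π) qbar / (γ₁ * γ₂ * (π qbar - L + c)) := by
    have : (1 + ℓ) * ℓ = deriv (deriv π) qbar / (γ₁ * γ₂ * (π qbar - L + c)) := by
      rw [huniq]
      field_simp
    linarith [this, sq ℓ]
  -- nonnegativity of ℓ
  have hℓ0 : 0 ≤ ℓ := by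
    have hev : ∀ᶠ m in nhdsWithin qbar (Set.Iio qbar), 0 ≤ z m / (m - qbar) := by
      filter_upwards [hIoo] with m hm
      exact le_of_lt (div_pos_of_neg_of_neg (hzneg m hm) (sub_neg.mpr hm.2))
    exact ge_of_tendsto hA hev
  refine ⟨hK, ?_, hℓ0⟩
  have h14 : deriv (deriv π) qbar / (γ₁ * γ₂ * (π qbar - L + c)) + 1 / 4 = (ℓ + 1 / 2) ^ 2 := by
    rw [← hK]; ring
  rw [h14, Real.sqrt_sq (by linarith)]
  ring
end

section
/- Suppose z : I → ℝ is C¹ with z(m) < 0 and satisfies 1 + z'(m) = (g(-z(m))/g'(-z(m)))·(π'(m)/(π(m) - L + c)) on I, where g, π are as below. Setting y(m) = e^{-(γ₁-γ₂)z(m)}, the function y satisfies the Abel equation of the second kind: y'(m)·(y(m) - 1) = f₁(m)·y(m) + f₂(m)·y(m)², where f₁(m) = ((γ₁-γ₂)/γ₂)·(π'(m)/(π(m)-L+c) - γ₂) and f₂(m) = ((γ₁-γ₂)/γ₁)·(γ₁ - π'(m)/(π(m)-L+c)). -/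
theorem stmt_16 (γ₁ γ₂ : ℝ) (h1 : 0 < γ₁) (h2 : γ₂ < 0) (g : ℝ → ℝ)
    (hg : ∀ x, g x = (γ₁ * Real.exp (γ₂ * x) - γ₂ * Real.exp (γ₁ * x)) / (γ₁ - γ₂))
    (π : ℝ → ℝ) (L c : ℝ) (I : Set ℝ) (hI : IsOpen I)
    (hpos : ∀ m ∈ I, 0 < π m - L + c)
    (z : ℝ → ℝ) (hzneg : ∀ m ∈ I, z m < 0)
    (hode : ∀ m ∈ I,
      HasDerivAt z
        (g (-z m) / deriv g (-z m) * (deriv π m / (π m - L + c)) - 1) m) :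
    ∀ m ∈ I,
      deriv (fun m => Real.exp (-(γ₁ - γ₂) * z m)) m *
          (Real.exp (-(γ₁ - γ₂) * z m) - 1) =
        ((γ₁ - γ₂) / γ₂ * (deriv π m / (π m - L + c) - γ₂)) *
            Real.exp (-(γ₁ - γ₂) * z m) +
          ((γ₁ - γ₂) / γ₁ * (γ₁ - deriv π m / (π m - L + c))) *
            Real.exp (-(γ₁ - γ₂) * z m) ^ 2 := by
  intro m hm
  have hne : γ₁ - γ₂ ≠ 0 := by linarith
  have hg1 : γ₁ ≠ 0 := ne_of_gt h1
  have hg2 : γ₂ ≠ 0 := ne_of_lt h2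
  set t : ℝ := -z m with ht_def
  have ht : 0 < t := by simp [ht_def]; linarith [hzneg m hm]
  -- derivative of g at any point
  have hgfun : g = fun x => (γ₁ * Real.exp (γ₂ * x) - γ₂ * Real.exp (γ₁ * x)) / (γ₁ - γ₂) :=
    funext hg
  have hdg : deriv g t =
      (γ₁ * (Real.exp (γ₂ * t) * γ₂) - γ₂ * (Real.exp (γ₁ * t) * γ₁)) / (γ₁ - γ₂) := by
    rw [hgfun]
    have h2' : HasDerivAt (fun x : ℝ => γ₂ * x) γ₂ t := by
      simpa using (hasDerivAt_id t).const_mul γ₂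
    have h1' : HasDerivAt (fun x : ℝ => γ₁ * x) γ₁ t := by
      simpa using (hasDerivAt_id t).const_mul γ₁
    exact ((((h2'.exp.const_mul γ₁).sub (h1'.exp.const_mul γ₂)).div_const (γ₁ - γ₂))).deriv
  -- derivative of y
  set P : ℝ := deriv π m / (π m - L + c) with hP
  have hz' : HasDerivAt z (g t / deriv g t * P - 1) m := hode m hm
  have hy : HasDerivAt (fun m => Real.exp (-(γ₁ - γ₂) * z m))
      (Real.exp (-(γ₁ - γ₂) * z m) * (-(γ₁ - γ₂) * (g t / deriv g t * P - 1))) m :=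
    (hz'.const_mul (-(γ₁ - γ₂))).exp
  rw [hy.deriv]
  set E1 : ℝ := Real.exp (γ₂ * t) with hE1
  set E2 : ℝ := Real.exp (γ₁ * t) with hE2
  have hYE : Real.exp (-(γ₁ - γ₂) * z m) = E2 / E1 := by
    rw [hE1, hE2, ← Real.exp_sub]
    rw [ht_def]
    ring_nf
  have hE1pos : 0 < E1 := Real.exp_pos _
  have hE2pos : 0 < E2 := Real.exp_pos _
  have hE12 : E1 < E2 := Real.exp_lt_exp.mpr (by nlinarith)
  have hgt : g t = (γ₁ * E1 - γ₂ * E2) / (γ₁ - γ₂) := hg t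
  have hdgne : deriv g t ≠ 0 := by
    rw [hdg]
    have : γ₁ * (E1 * γ₂) - γ₂ * (E2 * γ₁) = γ₁ * γ₂ * (E1 - E2) := by ring
    rw [this]
    have : γ₁ * γ₂ * (E1 - E2) ≠ 0 := by
      apply mul_ne_zero (mul_ne_zero hg1 hg2); linarith
    exact div_ne_zero this hne
  rw [hYE, hgt, hdg]
  have hEne : E2 - E1 ≠ 0 := by linarith
  have hpden : π m - L + c ≠ 0 := ne_of_gt (hpos m hm)
  have hkey : γ₁ * (E1 * γ₂) - γ₂ * (E2 * γ₁) ≠ 0 := by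
    have : γ₁ * (E1 * γ₂) - γ₂ * (E2 * γ₁) = γ₁ * γ₂ * (E1 - E2) := by ring
    rw [this]
    exact mul_ne_zero (mul_ne_zero hg1 hg2) (by linarith)
  field_simp [hpden, hkey, sub_ne_zero.mpr (ne_of_lt hE12)]
  ring
end
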